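/- For every real number x > 1, every integer ℓ ≥ 1 and every integer n ≥ 1, S^{ℓ+n}(2^n · x) ≥ S^ℓ(x) / 2^n. -/
import Mathlib


open Filter Topology
open scoped Classical

noncomputable section

/-- The multiplicity `A(m)`: the number of positive integers `n` with `φ(n) = m`. -/
def totA (m : ℕ) : ℕ := Set.ncard {n : ℕ | 0 < n ∧ n.totient = m}

/-- The set of totients `𝒱`. -/
def totV : Set ℕ := {m : ℕ | ∃ n : ℕ, 0 < n ∧ n.totient = m}

/-- The stratum `𝒱^ℓ` of totients congruent to `2^ℓ` mod `2^(ℓ+1)`. -/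
def totVl (ℓ : ℕ) : Set ℕ := {m ∈ totV | m % 2 ^ (ℓ + 1) = 2 ^ ℓ}

/-- `U(x)`: the number of elements of `U` not exceeding `x`. -/
def countUpTo (U : Set ℕ) (x : ℝ) : ℕ := Set.ncard {n ∈ U | (n : ℝ) ≤ x}

/-- `π(x)`: the number of primes not exceeding `x`. -/
def primePi (x : ℝ) : ℕ := Set.ncard {p : ℕ | p.Prime ∧ (p : ℝ) ≤ x}

/-- `S^ℓ(x) = Σ_{m ∈ 𝒱^ℓ, m ≤ x} A(m)`. -/
def totS (ℓ : ℕ) (x : ℝ) : ℕ :=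
  ∑ m ∈ Finset.range (⌊x⌋₊ + 1), if m ∈ totVl ℓ then totA m else 0

end


/-- For odd `t`, `t ≤ φ(t)²`. -/
lemma odd_le_totient_sq : ∀ t : ℕ, Odd t → t ≤ t.totient * t.totient := by
  intro t
  induction t using Nat.strong_induction_on with
  | _ t IH =>
    intro ht
    have ht0 : t ≠ 0 := by rintro rfl; simp at ht
    by_cases h1 : t = 1
    · simp [h1]
    obtain ⟨p, hpp, hpd⟩ : ∃ p : ℕ, p.Prime ∧ p ∣ t :=
      ⟨t.minFac, Nat.minFac_prime h1, Nat.minFac_dvd t⟩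
    obtain ⟨s, hts⟩ := hpd
    have hodds : Odd p ∧ Odd s := Nat.odd_mul.mp (hts ▸ ht)
    have hp3 : 3 ≤ p := by
      have h2 := hpp.two_le
      have := Nat.odd_iff.mp hodds.1
      omega
    have hs0 : 0 < s := by
      rcases Nat.eq_zero_or_pos s with rfl | h
      · rw [mul_zero] at hts; omega
      · exact h
    have hslt : s < t := by rw [hts]; nlinarith
    have hIH : s ≤ s.totient * s.totient := IH s hslt hodds.2
    subst hts
    by_cases hps : p ∣ s
    · have htot : (p * s).totient = p * s.totient :=
        Nat.totient_mul_of_prime_of_dvd hpp hps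
      rw [htot]
      calc p * s ≤ p * (s.totient * s.totient) := Nat.mul_le_mul_left p hIH
        _ ≤ (p * p) * (s.totient * s.totient) :=
            Nat.mul_le_mul_right _ (Nat.le_mul_of_pos_left p hpp.pos)
        _ = p * s.totient * (p * s.totient) := by ring
    · have hcop : Nat.Coprime p s := (Nat.Prime.coprime_iff_not_dvd hpp).mpr hps
      have htot : (p * s).totient = (p - 1) * s.totient := by
        rw [Nat.totient_mul hcop, Nat.totient_prime hpp]
      rw [htot]
      have hkey : p ≤ (p - 1) * (p - 1) := by
        rcases Nat.exists_eq_add_of_le hp3 with ⟨q, rfl⟩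
        have h32 : 3 + q - 1 = q + 2 := by omega
        rw [h32]; nlinarith
      calc p * s ≤ p * (s.totient * s.totient) := Nat.mul_le_mul_left p hIH
        _ ≤ ((p - 1) * (p - 1)) * (s.totient * s.totient) := Nat.mul_le_mul_right _ hkey
        _ = (p - 1) * s.totient * ((p - 1) * s.totient) := by ring

/-- For all `k`, `k ≤ 2·φ(k)²`. -/
lemma le_two_totient_sq : ∀ k : ℕ, k ≤ 2 * (k.totient * k.totient) := by
  intro k
  induction k using Nat.strong_induction_on with
  | _ k IH =>
    rcases Nat.even_or_odd k with hk | hk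
    · rcases Nat.eq_zero_or_pos k with rfl | h0
      · simp
      obtain ⟨s, rfl⟩ : 2 ∣ k := even_iff_two_dvd.mp hk
      have hs0 : 0 < s := by omega
      have hslt : s < 2 * s := by omega
      by_cases h2s : 2 ∣ s
      · have htot : (2 * s).totient = 2 * s.totient :=
          Nat.totient_mul_of_prime_of_dvd Nat.prime_two h2s
        have := IH s hslt
        rw [htot]; nlinarith
      · have hsodd : Odd s := Nat.odd_iff.mpr (by omega)
        have hcop : Nat.Coprime 2 s := (Nat.Prime.coprime_iff_not_dvd Nat.prime_two).mpr h2s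
        have htot : (2 * s).totient = s.totient := by
          rw [Nat.totient_mul hcop, Nat.totient_two, one_mul]
        have := odd_le_totient_sq s hsodd
        rw [htot]; omega
    · have := odd_le_totient_sq k hk; omega

lemma fiber_finite (m : ℕ) : {k : ℕ | 0 < k ∧ k.totient = m}.Finite := by
  apply Set.Finite.subset (Set.finite_Iic (2 * (m * m)))
  rintro k ⟨hk, rfl⟩
  simpa [Set.mem_Iic] using le_two_totient_sq k

lemma tot_pow_mul_even {k : ℕ} (hk : 2 ∣ k) (n : ℕ) :
    (2 ^ n * k).totient = 2 ^ n * k.totient := by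
  induction n with
  | zero => simp
  | succ j ih =>
    have h2 : 2 ∣ 2 ^ j * k := Dvd.dvd.mul_left hk _
    calc (2 ^ (j+1) * k).totient = (2 * (2 ^ j * k)).totient := by ring_nf
      _ = 2 * (2 ^ j * k).totient := Nat.totient_mul_of_prime_of_dvd Nat.prime_two h2
      _ = 2 ^ (j+1) * k.totient := by rw [ih]; ring

lemma tot_pow_mul_odd {k : ℕ} (hk : Odd k) (n : ℕ) :
    (2 ^ (n + 1) * k).totient = 2 ^ n * k.totient := by
  have hcop : Nat.Coprime (2 ^ (n + 1)) k :=
    Nat.Coprime.pow_left _ ((Nat.Prime.coprime_iff_not_dvd Nat.prime_two).mpr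
      (by rw [← even_iff_two_dvd]; exact (Nat.not_even_iff_odd.mpr hk)))
  rw [Nat.totient_mul hcop, Nat.totient_prime_pow Nat.prime_two (Nat.succ_pos n)]
  simp

lemma totA_le_two_mul {m n : ℕ} (hn : 1 ≤ n) : totA m ≤ 2 * totA (2 ^ n * m) := by
  obtain ⟨j, rfl⟩ : ∃ j, n = j + 1 := ⟨n - 1, by omega⟩
  set F := {k : ℕ | 0 < k ∧ k.totient = m} with hF
  set G := {k : ℕ | 0 < k ∧ k.totient = 2 ^ (j + 1) * m} with hG
  have hGfin : G.Finite := fiber_finite _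
  have hsub : F ⊆ (F ∩ {k | 2 ∣ k}) ∪ (F ∩ {k | Odd k}) := by
    intro k hk
    rcases Nat.even_or_odd k with h | h
    · exact Or.inl ⟨hk, even_iff_two_dvd.mp h⟩
    · exact Or.inr ⟨hk, h⟩
  have he : (F ∩ {k | 2 ∣ k}).ncard ≤ G.ncard :=
    Set.ncard_le_ncard_of_injOn (fun k => 2 ^ (j + 1) * k)
      (by rintro k ⟨⟨hk0, hkm⟩, hk2⟩
          exact ⟨by positivity, by rw [tot_pow_mul_even hk2, hkm]⟩)
      (fun a _ b _ hab => Nat.eq_of_mul_eq_mul_left (by positivity) hab)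
      hGfin
  have ho : (F ∩ {k | Odd k}).ncard ≤ G.ncard :=
    Set.ncard_le_ncard_of_injOn (fun k => 2 ^ (j + 2) * k)
      (by rintro k ⟨⟨hk0, hkm⟩, hk1⟩
          exact ⟨by positivity, by rw [tot_pow_mul_odd hk1, hkm]⟩)
      (fun a _ b _ hab => Nat.eq_of_mul_eq_mul_left (by positivity) hab)
      hGfin
  have hFfin : ((F ∩ {k | 2 ∣ k}) ∪ (F ∩ {k | Odd k})).Finite :=
    ((fiber_finite m).inter_of_left _).union ((fiber_finite m).inter_of_left _)
  calc totA m = F.ncard := rfl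
    _ ≤ ((F ∩ {k | 2 ∣ k}) ∪ (F ∩ {k | Odd k})).ncard := Set.ncard_le_ncard hsub hFfin
    _ ≤ (F ∩ {k | 2 ∣ k}).ncard + (F ∩ {k | Odd k}).ncard := Set.ncard_union_le _ _
    _ ≤ 2 * totA (2 ^ (j + 1) * m) := by
        change _ ≤ 2 * G.ncard; omega

lemma totVl_map {m ℓ n : ℕ} (hn : 1 ≤ n) (hm : m ∈ totVl ℓ) :
    2 ^ n * m ∈ totVl (ℓ + n) := by
  obtain ⟨⟨k, hk0, hkm⟩, hmod⟩ := hm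
  constructor
  · -- membership in totV
    obtain ⟨j, rfl⟩ : ∃ j, n = j + 1 := ⟨n - 1, by omega⟩
    rcases Nat.even_or_odd k with h | h
    · exact ⟨2 ^ (j + 1) * k, by positivity,
        by rw [tot_pow_mul_even (even_iff_two_dvd.mp h), hkm]⟩
    · exact ⟨2 ^ (j + 2) * k, by positivity, by rw [tot_pow_mul_odd h, hkm]⟩
  · -- the congruence
    have hm' : m = 2 ^ (ℓ + 1) * (m / 2 ^ (ℓ + 1)) + 2 ^ ℓ := by
      conv_lhs => rw [← Nat.div_add_mod m (2 ^ (ℓ + 1))]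
      rw [hmod]
    obtain ⟨q, hq⟩ : ∃ q, m = 2 ^ (ℓ + 1) * q + 2 ^ ℓ := ⟨_, hm'⟩
    have h2 : 2 ^ n * m = 2 ^ (ℓ + n + 1) * q + 2 ^ (ℓ + n) := by rw [hq]; ring
    rw [h2, Nat.mul_add_mod, Nat.mod_eq_of_lt]
    exact Nat.pow_lt_pow_right one_lt_two (by omega)

/-- For every real `x > 1` and integers `ℓ ≥ 1`, `n ≥ 1`,
`S^{ℓ+n}(2^n·x) ≥ S^ℓ(x)/2^n`. -/
theorem stmt_15 (x : ℝ) (hx : 1 < x) (ℓ : ℕ) (hℓ : 1 ≤ ℓ) (n : ℕ) (hn : 1 ≤ n) :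
    (totS ℓ x : ℝ) / 2 ^ n ≤ (totS (ℓ + n) (2 ^ n * x) : ℝ) := by
  have hx0 : (0:ℝ) ≤ x := by linarith
  classical
  set S : Finset ℕ := (Finset.range (⌊x⌋₊ + 1)).filter (· ∈ totVl ℓ) with hS
  set S' : Finset ℕ := (Finset.range (⌊(2:ℝ) ^ n * x⌋₊ + 1)).filter (· ∈ totVl (ℓ + n)) with hS'
  have h1 : totS ℓ x = ∑ m ∈ S, totA m := (Finset.sum_filter _ _).symm
  have h1' : totS (ℓ + n) (2 ^ n * x) = ∑ m ∈ S', totA m := (Finset.sum_filter _ _).symm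
  have hinj : Set.InjOn (fun m => 2 ^ n * m) S :=
    fun a _ b _ hab => Nat.eq_of_mul_eq_mul_left (by positivity) hab
  have hmaps : S.image (fun m => 2 ^ n * m) ⊆ S' := by
    intro m' hm'
    obtain ⟨m, hm, rfl⟩ := Finset.mem_image.mp hm'
    rw [hS, Finset.mem_filter, Finset.mem_range] at hm
    rw [hS', Finset.mem_filter, Finset.mem_range]
    constructor
    · have hmx : (m : ℝ) ≤ x := (Nat.le_floor_iff hx0).mp (by omega)
      have : ((2 ^ n * m : ℕ) : ℝ) ≤ 2 ^ n * x := by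
        push_cast
        have : (0:ℝ) < 2 ^ n := by positivity
        nlinarith
      have := Nat.le_floor this
      omega
    · exact totVl_map hn hm.2
  have key : totS ℓ x ≤ 2 * totS (ℓ + n) (2 ^ n * x) := by
    rw [h1, h1']
    calc ∑ m ∈ S, totA m ≤ ∑ m ∈ S, 2 * totA (2 ^ n * m) :=
          Finset.sum_le_sum (fun m _ => totA_le_two_mul hn)
      _ = 2 * ∑ m ∈ S, totA (2 ^ n * m) := by rw [Finset.mul_sum]
      _ = 2 * ∑ m' ∈ S.image (fun m => 2 ^ n * m), totA m' := by
          rw [Finset.sum_image (fun a ha b hb => hinj ha hb)]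
      _ ≤ 2 * ∑ m' ∈ S', totA m' := by
          have := Finset.sum_le_sum_of_subset (f := totA) hmaps
          omega
  have h2n : (2:ℕ) ≤ 2 ^ n := by calc (2:ℕ) = 2 ^ 1 := rfl
                                    _ ≤ 2 ^ n := Nat.pow_le_pow_right (by norm_num) hn
  have key2 : totS ℓ x ≤ 2 ^ n * totS (ℓ + n) (2 ^ n * x) := by nlinarith
  rw [div_le_iff₀ (by positivity)]
  have := (Nat.cast_le (α := ℝ)).mpr key2
  push_cast at this
  linarith
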